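/- Let n ≥ 1, let L be a De Morgan lattice, let I be a nonempty ideal of L, and let F be an n-filter on L with F ∩ I = ∅. If F is complete (respectively consistent, classical, Kalman), then there exists a prime n-filter G on L that is complete (respectively consistent, classical, Kalman) with F ⊆ G and G ∩ I = ∅. -/

import Mathlib

/-- A De Morgan lattice: a distributive lattice with an antitone involution. -/
class DeMorgan (L : Type*) extends DistribLattice L where
  dneg : L → L
  dneg_dneg : ∀ x : L, dneg (dneg x) = x
  dneg_sup : ∀ x y : L, dneg (x ⊔ y) = dneg x ⊓ dneg y

prefix:max "∼" => DeMorgan.dneg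

section Defs

variable {α : Type*}

/-- An upward closed subset of a lattice. -/
def IsUpset [Lattice α] (F : Set α) : Prop :=
  ∀ ⦃x y : α⦄, x ∈ F → x ≤ y → y ∈ F

/-- A lattice filter: an upset closed under binary meets. -/
def IsLatFilter [Lattice α] (F : Set α) : Prop :=
  IsUpset F ∧ ∀ x y : α, x ∈ F → y ∈ F → x ⊓ y ∈ F

/-- An `n`-filter: an upset such that for every nonempty finite `Y`, if the meet of
every nonempty subset of `Y` of size at most `n` lies in `F`, then so does the meet of `Y`. -/
def IsNFilter [Lattice α] (n : ℕ) (F : Set α) : Prop :=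
  IsUpset F ∧ ∀ (Y : Finset α) (hY : Y.Nonempty),
    (∀ (X : Finset α) (hX : X.Nonempty), X ⊆ Y → X.card ≤ n → X.inf' hX id ∈ F) →
    Y.inf' hY id ∈ F

/-- A prime upset: `x ⊔ y ∈ F` implies `x ∈ F` or `y ∈ F`. -/
def IsPrimeUpset [Lattice α] (F : Set α) : Prop :=
  ∀ x y : α, x ⊔ y ∈ F → x ∈ F ∨ y ∈ F

/-- A downward closed subset of a lattice. -/
def IsDownset [Lattice α] (I : Set α) : Prop :=
  ∀ ⦃x y : α⦄, x ∈ I → y ≤ x → y ∈ I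

/-- A lattice ideal: a downset closed under binary joins. -/
def IsIdeal [Lattice α] (I : Set α) : Prop :=
  IsDownset I ∧ ∀ x y : α, x ∈ I → y ∈ I → x ⊔ y ∈ I

/-- An `n`-ideal: the order dual notion of an `n`-filter. -/
def IsNIdeal [Lattice α] (n : ℕ) (I : Set α) : Prop :=
  IsDownset I ∧ ∀ (Y : Finset α) (hY : Y.Nonempty),
    (∀ (X : Finset α) (hX : X.Nonempty), X ⊆ Y → X.card ≤ n → X.sup' hX id ∈ I) →
    Y.sup' hY id ∈ I

variable {L : Type*} [DeMorgan L]

/-- Almost complete upset: `x ∈ F` implies `x ⊓ (y ⊔ ∼y) ∈ F`. -/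
def AlmostComplete (F : Set L) : Prop := ∀ x ∈ F, ∀ y : L, x ⊓ (y ⊔ ∼y) ∈ F

/-- Complete upset: almost complete and nonempty. -/
def IsCompleteUpset (F : Set L) : Prop := AlmostComplete F ∧ F.Nonempty

/-- Almost consistent upset: `(x ⊓ ∼x) ⊔ y ∈ F` implies `y ∈ F`. -/
def AlmostConsistent (F : Set L) : Prop := ∀ x y : L, (x ⊓ ∼x) ⊔ y ∈ F → y ∈ F

/-- Consistent upset: almost consistent and not total. -/
def IsConsistentUpset (F : Set L) : Prop := AlmostConsistent F ∧ F ≠ Set.univ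

/-- Classical upset: complete and consistent. -/
def IsClassicalUpset (F : Set L) : Prop := IsCompleteUpset F ∧ IsConsistentUpset F

/-- Kalman upset. -/
def IsKalmanUpset (F : Set L) : Prop :=
  ∀ x y z u : L, ((x ⊓ ∼x) ⊓ z) ⊔ u ∈ F → ((y ⊔ ∼y) ⊓ z) ⊔ u ∈ F

/-- A homomorphism of De Morgan lattices. -/
def IsDMHom {L M : Type*} [DeMorgan L] [DeMorgan M] (h : L → M) : Prop :=
  (∀ x y : L, h (x ⊓ y) = h x ⊓ h y) ∧ (∀ x y : L, h (x ⊔ y) = h x ⊔ h y) ∧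
    ∀ x : L, h (∼x) = ∼(h x)

/-- The filter generated by all elements of the form `x ⊔ ∼x`. -/
def Fcomp (L : Type*) [DeMorgan L] : Set L :=
  {a | ∃ (s : Finset L) (hs : s.Nonempty), s.inf' hs (fun x => x ⊔ ∼x) ≤ a}

/-- The `n`-filter generated by a set. -/
def nFilterGen (n : ℕ) (U : Set L) : Set L :=
  ⋂₀ {F : Set L | IsNFilter n F ∧ U ⊆ F}

/-- `Comp U`. -/
def CompCl (U : Set L) : Set L := {x | ∃ a ∈ U, ∃ f ∈ Fcomp L, a ⊓ f ≤ x}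

/-- `Cons U`. -/
def ConsCl (U : Set L) : Set L := {x | ∃ f ∈ Fcomp L, ∼f ⊔ x ∈ U}

/-- A congruence of De Morgan lattices, as a binary relation. -/
def IsCongruence (θ : L → L → Prop) : Prop :=
  Equivalence θ ∧
  (∀ a b c d : L, θ a b → θ c d → θ (a ⊓ c) (b ⊓ d)) ∧
  (∀ a b c d : L, θ a b → θ c d → θ (a ⊔ c) (b ⊔ d)) ∧
  ∀ a b : L, θ a b → θ (∼a) (∼b)

end Defs

/-- The four-element De Morgan lattice `DM₁` on `Bool × Bool`. -/
instance : DeMorgan (Bool × Bool) :=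
  { (inferInstance : DistribLattice (Bool × Bool)) with
    dneg := fun p => (!p.2, !p.1)
    dneg_dneg := by decide
    dneg_sup := by decide }

/-- Powers of `DM₁`, with componentwise operations. -/
instance {ι : Type*} : DeMorgan (ι → Bool × Bool) :=
  { (inferInstance : DistribLattice (ι → Bool × Bool)) with
    dneg := fun f i => ∼(f i)
    dneg_dneg := fun f => funext fun i => DeMorgan.dneg_dneg (f i)
    dneg_sup := fun f g => funext fun i => DeMorgan.dneg_sup (f i) (g i) }

section AuxGen
variable {α : Type*} [DistribLattice α]

lemma sup_inf'_distrib (s : Finset α) (hs : s.Nonempty) (c : α) (f : α → α) :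
    c ⊔ s.inf' hs f = s.inf' hs (fun x => c ⊔ f x) := by
  induction hs using Finset.Nonempty.cons_induction with
  | singleton a => simp
  | cons a s ha hs ih => rw [Finset.inf'_cons, Finset.inf'_cons, sup_inf_left, ih]; exact hs

lemma isNFilter_preimage_sup (n : ℕ) {G : Set α} (hG : IsNFilter n G) (e : α) :
    IsNFilter n {x | e ⊔ x ∈ G} := by
  classical
  constructor
  · intro x y hx hxy
    exact hG.1 hx (sup_le_sup_left hxy e)
  · intro Y hY hsmall
    have hY' : (Y.image (fun x => e ⊔ x)).Nonempty := hY.image _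
    have hmain := hG.2 _ hY' ?_
    · rw [Finset.inf'_image] at hmain
      show e ⊔ Y.inf' hY id ∈ G
      rw [sup_inf'_distrib]
      exact hmain
    · intro X' hX' hX'sub hX'card
      have hpre : ∀ z ∈ X', ∃ y, y ∈ Y ∧ e ⊔ y = z := by
        intro z hz
        simpa using hX'sub hz
      choose g hg1 hg2 using hpre
      set X : Finset α := X'.attach.image (fun z => g z.1 z.2) with hX
      have hXsub : X ⊆ Y := by
        intro y hy
        rw [hX, Finset.mem_image] at hy
        obtain ⟨z, hz, rfl⟩ := hy
        exact hg1 _ _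
      have hXne : X.Nonempty := (hX'.attach).image _
      have hXcard : X.card ≤ n :=
        le_trans (le_trans Finset.card_image_le (by rw [Finset.card_attach])) hX'card
      have hmem := hsmall X hXne hXsub hXcard
      have himg : X.image (fun x => e ⊔ x) = X' := by
        rw [hX, Finset.image_image]
        have heq : ((fun x => e ⊔ x) ∘ fun z : {x // x ∈ X'} => g z.1 z.2)
            = fun z : {x // x ∈ X'} => z.1 := by
          funext z; exact hg2 z.1 z.2
        rw [heq, Finset.attach_image_val]
      have hmem' : e ⊔ X.inf' hXne id ∈ G := hmem
      clear hX
      clear_value X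
      subst himg
      rw [Finset.inf'_image]
      rw [sup_inf'_distrib] at hmem'
      exact hmem'

end AuxGen

section ChainAux
variable {α : Type*}

lemma finset_subset_chain_union {c : Set (Set α)} (hc : IsChain (· ⊆ ·) c)
    (hne : c.Nonempty) (S : Finset α) (hS : ↑S ⊆ ⋃₀ c) : ∃ G ∈ c, ↑S ⊆ G := by
  classical
  induction S using Finset.cons_induction with
  | empty => obtain ⟨G, hG⟩ := hne; exact ⟨G, hG, by simp⟩
  | cons a S ha ih =>
    obtain ⟨G1, hG1, hSG1⟩ := ih ((Finset.coe_subset.mpr (Finset.subset_cons ha)).trans hS)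
    obtain ⟨G2, hG2, haG2⟩ := hS (Finset.mem_coe.mpr (Finset.mem_cons_self a S))
    rcases hc.total hG1 hG2 with h | h
    · refine ⟨G2, hG2, ?_⟩
      intro x hx
      rcases Finset.mem_cons.mp hx with rfl | hx
      · exact haG2
      · exact h (hSG1 hx)
    · refine ⟨G1, hG1, ?_⟩
      intro x hx
      rcases Finset.mem_cons.mp hx with rfl | hx
      · exact h haG2
      · exact hSG1 hx

lemma isNFilter_sUnion_chain [DistribLattice α] {n : ℕ} {c : Set (Set α)}
    (hc : IsChain (· ⊆ ·) c) (hne : c.Nonempty) (h : ∀ G ∈ c, IsNFilter n G) :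
    IsNFilter n (⋃₀ c) := by
  classical
  constructor
  · intro x y hx hxy
    obtain ⟨G, hG, hxG⟩ := hx
    exact ⟨G, hG, (h G hG).1 hxG hxy⟩
  · intro Y hY hsmall
    have hmemT : ∀ X ∈ Y.powerset.filter (fun X => X.Nonempty ∧ X.card ≤ n), X.Nonempty :=
      fun X hX => (Finset.mem_filter.mp hX).2.1
    have hsub : ↑((Y.powerset.filter (fun X => X.Nonempty ∧ X.card ≤ n)).attach.image
        (fun X => X.1.inf' (hmemT X.1 X.2) id)) ⊆ ⋃₀ c := by
      intro x hx
      obtain ⟨X, -, rfl⟩ := Finset.mem_image.mp (Finset.mem_coe.mp hx)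
      have hXT := Finset.mem_filter.mp X.2
      exact hsmall X.1 _ (Finset.mem_powerset.mp hXT.1) hXT.2.2
    obtain ⟨G, hGc, hSG⟩ := finset_subset_chain_union hc hne _ hsub
    refine ⟨G, hGc, (h G hGc).2 Y hY ?_⟩
    intro X hX hXY hXc
    apply hSG
    have hXT : X ∈ Y.powerset.filter (fun X => X.Nonempty ∧ X.card ≤ n) :=
      Finset.mem_filter.mpr ⟨Finset.mem_powerset.mpr hXY, hX, hXc⟩
    exact Finset.mem_coe.mpr (Finset.mem_image.mpr ⟨⟨X, hXT⟩, Finset.mem_attach _ _, rfl⟩)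

end ChainAux


section KeyArg

variable {L : Type*} [DeMorgan L]

/-- The least `n`-filter with property `P` containing `U`. -/
def ClP (n : ℕ) (P : Set L → Prop) (U : Set L) : Set L :=
  ⋂₀ {G : Set L | IsNFilter n G ∧ P G ∧ U ⊆ G}

lemma subset_ClP (n : ℕ) (P : Set L → Prop) (U : Set L) : U ⊆ ClP n P U :=
  fun _ hx => Set.mem_sInter.mpr fun _ hG => hG.2.2 hx

lemma ClP_subset {n : ℕ} {P : Set L → Prop} {U G : Set L}
    (hG : IsNFilter n G) (hP : P G) (hU : U ⊆ G) : ClP n P U ⊆ G :=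
  fun _ hx => Set.mem_sInter.mp hx G ⟨hG, hP, hU⟩

lemma ClP_isNFilter (n : ℕ) (P : Set L → Prop) (U : Set L) : IsNFilter n (ClP n P U) := by
  constructor
  · intro x y hx hxy
    exact Set.mem_sInter.mpr fun G hG => hG.1.1 (Set.mem_sInter.mp hx G hG) hxy
  · intro Y hY hsmall
    refine Set.mem_sInter.mpr fun G hG => hG.1.2 Y hY fun X hX hXY hXc => ?_
    exact Set.mem_sInter.mp (hsmall X hX hXY hXc) G hG

lemma ClP_P {n : ℕ} {P : Set L → Prop}
    (hInter : ∀ S : Set (Set L), (∀ G ∈ S, P G) → P (⋂₀ S)) (U : Set L) :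
    P (ClP n P U) :=
  hInter {G | IsNFilter n G ∧ P G ∧ U ⊆ G} (fun _ hG => hG.2.1)

lemma keyLemma (n : ℕ) (P : Set L → Prop)
    (hInter : ∀ S : Set (Set L), (∀ G ∈ S, P G) → P (⋂₀ S))
    (hUnion : ∀ S : Set (Set L), (∀ G ∈ S, P G) → P (⋃₀ S))
    (hJoin : ∀ (G : Set L) (e : L), IsUpset G → P G → P {x | e ⊔ x ∈ G})
    {F I : Set L} (hI : IsIdeal I) (hF : IsNFilter n F) (hPF : P F)
    (hdisj : F ∩ I = ∅) :
    ∃ G : Set L, IsNFilter n G ∧ IsPrimeUpset G ∧ P G ∧ F ⊆ G ∧ G ∩ I = ∅ := by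
  have hF𝒮 : F ∈ {G : Set L | IsNFilter n G ∧ P G ∧ G ∩ I = ∅} := ⟨hF, hPF, hdisj⟩
  have hchain : ∀ c ⊆ {G : Set L | IsNFilter n G ∧ P G ∧ G ∩ I = ∅},
      IsChain (· ⊆ ·) c → c.Nonempty →
      ∃ ub ∈ {G : Set L | IsNFilter n G ∧ P G ∧ G ∩ I = ∅}, ∀ s ∈ c, s ⊆ ub := by
    intro c hc𝒮 hc hcne
    refine ⟨⋃₀ c, ⟨isNFilter_sUnion_chain hc hcne (fun G hG => (hc𝒮 hG).1),
      hUnion c (fun G hG => (hc𝒮 hG).2.1), ?_⟩, fun s hs => Set.subset_sUnion_of_mem hs⟩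
    apply Set.eq_empty_iff_forall_notMem.mpr
    rintro x ⟨⟨G, hGc, hxG⟩, hxI⟩
    have hx : x ∈ G ∩ I := ⟨hxG, hxI⟩
    rw [(hc𝒮 hGc).2.2] at hx
    exact hx
  obtain ⟨M, hFM, hMmax⟩ := zorn_subset_nonempty _ hchain F hF𝒮
  obtain ⟨hMnf, hMP, hMI⟩ := hMmax.1
  have hMup : IsUpset M := hMnf.1
  refine ⟨M, hMnf, ?_, hMP, hFM, hMI⟩
  intro a b hab
  by_contra hcon
  push_neg at hcon
  obtain ⟨ha, hb⟩ := hcon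
  have hclaim : ∀ e, e ∉ M → ∃ i, i ∈ I ∧ i ∈ ClP n P (M ∪ {e}) := by
    intro e he
    by_contra hno
    push_neg at hno
    have hdisj' : ClP n P (M ∪ {e}) ∩ I = ∅ := by
      apply Set.eq_empty_iff_forall_notMem.mpr
      rintro x ⟨h1, h2⟩
      exact hno x h2 h1
    have hmem𝒮 : ClP n P (M ∪ {e}) ∈ {G : Set L | IsNFilter n G ∧ P G ∧ G ∩ I = ∅} :=
      ⟨ClP_isNFilter n P _, ClP_P hInter _, hdisj'⟩
    have hsub : M ⊆ ClP n P (M ∪ {e}) :=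
      Set.subset_union_left.trans (subset_ClP n P _)
    exact he (hMmax.2 hmem𝒮 hsub (subset_ClP n P _ (Set.mem_union_right _ rfl)))
  obtain ⟨i, hiI, hic⟩ := hclaim a ha
  obtain ⟨j, hjI, hjc⟩ := hclaim b hb
  have h1 : b ⊔ i ∈ M := by
    have hH : IsNFilter n {x | b ⊔ x ∈ M} := isNFilter_preimage_sup n hMnf b
    have hHP : P {x | b ⊔ x ∈ M} := hJoin M b hMup hMP
    have hsub : M ∪ {a} ⊆ {x | b ⊔ x ∈ M} := by
      rintro x (hx | rfl)
      · exact hMup hx le_sup_right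
      · show b ⊔ x ∈ M
        rwa [sup_comm]
    exact ClP_subset hH hHP hsub hic
  have h2 : i ⊔ j ∈ M := by
    have hH : IsNFilter n {x | i ⊔ x ∈ M} := isNFilter_preimage_sup n hMnf i
    have hHP : P {x | i ⊔ x ∈ M} := hJoin M i hMup hMP
    have hsub : M ∪ {b} ⊆ {x | i ⊔ x ∈ M} := by
      rintro x (hx | rfl)
      · exact hMup hx le_sup_right
      · show i ⊔ x ∈ M
        rwa [sup_comm]
    exact ClP_subset hH hHP hsub hjc
  have hmem : i ⊔ j ∈ M ∩ I := ⟨h2, hI.2 i j hiI hjI⟩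
  rw [hMI] at hmem
  exact hmem

/-! Preservation lemmas for the three basic properties. -/

lemma almostComplete_sInter {S : Set (Set L)} (hS : ∀ G ∈ S, AlmostComplete G) :
    AlmostComplete (⋂₀ S) := by
  intro x hx y
  exact Set.mem_sInter.mpr fun G hG => hS G hG x (Set.mem_sInter.mp hx G hG) y

lemma almostComplete_sUnion {S : Set (Set L)} (hS : ∀ G ∈ S, AlmostComplete G) :
    AlmostComplete (⋃₀ S) := by
  rintro x ⟨G, hG, hxG⟩ y
  exact ⟨G, hG, hS G hG x hxG y⟩

lemma almostComplete_join {G : Set L} (e : L) (hup : IsUpset G) (hP : AlmostComplete G) :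
    AlmostComplete {x | e ⊔ x ∈ G} := by
  intro x hx y
  show e ⊔ (x ⊓ (y ⊔ ∼y)) ∈ G
  have h := hP (e ⊔ x) hx y
  apply hup h
  rw [sup_inf_left]
  exact inf_le_inf_left _ le_sup_right

lemma almostConsistent_sInter {S : Set (Set L)} (hS : ∀ G ∈ S, AlmostConsistent G) :
    AlmostConsistent (⋂₀ S) := by
  intro x y hxy
  exact Set.mem_sInter.mpr fun G hG => hS G hG x y (Set.mem_sInter.mp hxy G hG)

lemma almostConsistent_sUnion {S : Set (Set L)} (hS : ∀ G ∈ S, AlmostConsistent G) :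
    AlmostConsistent (⋃₀ S) := by
  rintro x y ⟨G, hG, hxyG⟩
  exact ⟨G, hG, hS G hG x y hxyG⟩

lemma almostConsistent_join {G : Set L} (e : L) (hP : AlmostConsistent G) :
    AlmostConsistent {x | e ⊔ x ∈ G} := by
  intro x y h
  have h0 : e ⊔ ((x ⊓ ∼x) ⊔ y) ∈ G := h
  have h' : (x ⊓ ∼x) ⊔ (e ⊔ y) ∈ G := by
    rwa [sup_left_comm] at h0
  exact hP x (e ⊔ y) h'

lemma kalman_sInter {S : Set (Set L)} (hS : ∀ G ∈ S, IsKalmanUpset G) :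
    IsKalmanUpset (⋂₀ S) := by
  intro x y z u hxy
  exact Set.mem_sInter.mpr fun G hG => hS G hG x y z u (Set.mem_sInter.mp hxy G hG)

lemma kalman_sUnion {S : Set (Set L)} (hS : ∀ G ∈ S, IsKalmanUpset G) :
    IsKalmanUpset (⋃₀ S) := by
  rintro x y z u ⟨G, hG, hxyG⟩
  exact ⟨G, hG, hS G hG x y z u hxyG⟩

lemma kalman_join {G : Set L} (e : L) (hP : IsKalmanUpset G) :
    IsKalmanUpset {x | e ⊔ x ∈ G} := by
  intro x y z u h
  have h0 : e ⊔ (((x ⊓ ∼x) ⊓ z) ⊔ u) ∈ G := h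
  have h' : ((x ⊓ ∼x) ⊓ z) ⊔ (e ⊔ u) ∈ G := by
    rwa [sup_left_comm] at h0
  have h'' := hP x y z (e ⊔ u) h'
  show e ⊔ (((y ⊔ ∼y) ⊓ z) ⊔ u) ∈ G
  rwa [sup_left_comm]

end KeyArg

/-- prime separation for complete, consistent, classical, and Kalman
`n`-filters on De Morgan lattices. -/
theorem statement17 {L : Type*} [DeMorgan L] [Nonempty L] (n : ℕ) (hn : 1 ≤ n)
    (F I : Set L) (hI : IsIdeal I) (hIne : I.Nonempty)
    (hF : IsNFilter n F) (hdisj : F ∩ I = ∅) :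
    (IsCompleteUpset F → ∃ G : Set L, IsNFilter n G ∧ IsPrimeUpset G ∧
      IsCompleteUpset G ∧ F ⊆ G ∧ G ∩ I = ∅) ∧
    (IsConsistentUpset F → ∃ G : Set L, IsNFilter n G ∧ IsPrimeUpset G ∧
      IsConsistentUpset G ∧ F ⊆ G ∧ G ∩ I = ∅) ∧
    (IsClassicalUpset F → ∃ G : Set L, IsNFilter n G ∧ IsPrimeUpset G ∧
      IsClassicalUpset G ∧ F ⊆ G ∧ G ∩ I = ∅) ∧
    (IsKalmanUpset F → ∃ G : Set L, IsNFilter n G ∧ IsPrimeUpset G ∧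
      IsKalmanUpset G ∧ F ⊆ G ∧ G ∩ I = ∅) := by
  obtain ⟨iI, hiI⟩ := hIne
  have hne_univ : ∀ G : Set L, G ∩ I = ∅ → G ≠ Set.univ := by
    intro G hGdisj heq
    have : iI ∈ G ∩ I := ⟨heq ▸ Set.mem_univ iI, hiI⟩
    rw [hGdisj] at this
    exact this
  refine ⟨?_, ?_, ?_, ?_⟩
  · intro hcomp
    obtain ⟨G, h1, h2, h3, h4, h5⟩ := keyLemma n AlmostComplete
      (fun _ => almostComplete_sInter) (fun _ => almostComplete_sUnion)
      (fun _ e hup hP => almostComplete_join e hup hP) hI hF hcomp.1 hdisj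
    exact ⟨G, h1, h2, ⟨h3, hcomp.2.mono h4⟩, h4, h5⟩
  · intro hcons
    obtain ⟨G, h1, h2, h3, h4, h5⟩ := keyLemma n AlmostConsistent
      (fun _ => almostConsistent_sInter) (fun _ => almostConsistent_sUnion)
      (fun _ e _ hP => almostConsistent_join e hP) hI hF hcons.1 hdisj
    exact ⟨G, h1, h2, ⟨h3, hne_univ G h5⟩, h4, h5⟩
  · intro hcl
    obtain ⟨G, h1, h2, h3, h4, h5⟩ := keyLemma n
      (fun G => AlmostComplete G ∧ AlmostConsistent G)
      (fun S hS => ⟨almostComplete_sInter (fun G hG => (hS G hG).1),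
        almostConsistent_sInter (fun G hG => (hS G hG).2)⟩)
      (fun S hS => ⟨almostComplete_sUnion (fun G hG => (hS G hG).1),
        almostConsistent_sUnion (fun G hG => (hS G hG).2)⟩)
      (fun _ e hup hP => ⟨almostComplete_join e hup hP.1, almostConsistent_join e hP.2⟩)
      hI hF ⟨hcl.1.1, hcl.2.1⟩ hdisj
    exact ⟨G, h1, h2, ⟨⟨h3.1, hcl.1.2.mono h4⟩, ⟨h3.2, hne_univ G h5⟩⟩, h4, h5⟩
  · intro hk
    obtain ⟨G, h1, h2, h3, h4, h5⟩ := keyLemma n IsKalmanUpset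
      (fun _ => kalman_sInter) (fun _ => kalman_sUnion)
      (fun _ e _ hP => kalman_join e hP) hI hF hk hdisj
    exact ⟨G, h1, h2, h3, h4, h5⟩
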